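/- R̂ic(U_1) ≥ ((c+3)/4)(r−1) − (1/4)‖N‖² (that is, the last term is −(1/4) r² ‖H‖²). Equality holds if and only if T(U_1, U_1) = Σ_{j=2}^r T(U_j, U_j) and T(U_1, U_j) = 0 for all j = 2, …, r. -/

import Mathlib

open scoped RealInnerProductSpace

/-- Chen–Ricci inequality for the fibers (horizontal Reeb vector field). -/
theorem stmt_11 {V W : Type*} [NormedAddCommGroup V] [InnerProductSpace ℝ V]
    [NormedAddCommGroup W] [InnerProductSpace ℝ W]
    (c : ℝ) (r : ℕ) (hr : 0 < r)
    (U : OrthonormalBasis (Fin r) ℝ V)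
    (T : V →ₗ[ℝ] V →ₗ[ℝ] W) (hT : ∀ X Y, T X Y = T Y X)
    (N : W) (hN : N = ∑ j, T (U j) (U j))
    (Rhat : V → V → V → V → ℝ)
    (hRhat : ∀ X Y Z W', Rhat X Y Z W' =
      (c + 3) / 4 * (⟪Y, Z⟫ * ⟪X, W'⟫ - ⟪X, Z⟫ * ⟪Y, W'⟫)
        - ⟪T X W', T Y Z⟫ + ⟪T Y W', T X Z⟫)
    (Ric : V → ℝ) (hRic : ∀ u, Ric u = ∑ j, Rhat (U j) u u (U j)) :
    (Ric (U ⟨0, hr⟩) ≥ (c + 3) / 4 * ((r : ℝ) - 1) - (1 / 4) * ‖N‖ ^ 2) ∧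
    ((Ric (U ⟨0, hr⟩) = (c + 3) / 4 * ((r : ℝ) - 1) - (1 / 4) * ‖N‖ ^ 2) ↔
      (T (U ⟨0, hr⟩) (U ⟨0, hr⟩) =
          ∑ j ∈ Finset.univ.filter (fun j => j ≠ ⟨0, hr⟩), T (U j) (U j) ∧
        ∀ j : Fin r, j ≠ ⟨0, hr⟩ → T (U ⟨0, hr⟩) (U j) = 0)) := by
  have hU := U.orthonormal
  rw [orthonormal_iff_ite] at hU
  set i0 : Fin r := ⟨0, hr⟩ with hi0
  set a : W := T (U i0) (U i0) with ha
  set S : ℝ := ∑ j ∈ Finset.univ.filter (fun j => j ≠ i0), ‖T (U i0) (U j)‖^2 with hS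
  -- each term of the Ricci sum
  have hterm : ∀ j : Fin r, Rhat (U j) (U i0) (U i0) (U j)
      = (c+3)/4 * (1 - if j = i0 then 1 else 0)
        - ⟪T (U j) (U j), a⟫ + ‖T (U i0) (U j)‖^2 := by
    intro j
    rw [hRhat]
    simp only [hU]
    rw [hT (U j) (U i0), real_inner_self_eq_norm_sq]
    by_cases h : j = i0
    · subst h; norm_num; rw [ha, real_inner_self_eq_norm_sq]; ring
    · have h' : ¬ i0 = j := fun h' => h h'.symm
      simp only [eq_self_iff_true, if_true, if_neg h, if_neg h']
      ring
  have hsum1 : ∑ j : Fin r, ((c+3)/4 * (1 - if j = i0 then (1:ℝ) else 0))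
      = (c+3)/4 * ((r:ℝ) - 1) := by
    rw [← Finset.mul_sum, Finset.sum_sub_distrib, Finset.sum_const,
      Finset.sum_ite_eq' Finset.univ i0 (fun _ => (1:ℝ))]
    simp
  have hsum3 : ∑ j : Fin r, ‖T (U i0) (U j)‖^2 = ‖a‖^2 + S := by
    rw [hS, Finset.filter_ne',
      Finset.add_sum_erase Finset.univ (fun j => ‖T (U i0) (U j)‖^2) (Finset.mem_univ i0)]
  have hRicEq : Ric (U i0) = (c+3)/4*((r:ℝ)-1) - ⟪N, a⟫ + (‖a‖^2 + S) := by
    rw [hRic]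
    simp only [hterm]
    rw [Finset.sum_add_distrib, Finset.sum_sub_distrib, hsum1, hsum3, hN, sum_inner]
  have hexp : ‖a - (1/2:ℝ)•N‖^2 = ‖a‖^2 - ⟪N, a⟫ + (1/4)*‖N‖^2 := by
    rw [norm_sub_sq_real, real_inner_smul_right, real_inner_comm a N, norm_smul]
    simp only [Real.norm_eq_abs]
    rw [abs_of_nonneg (by norm_num : (0:ℝ) ≤ 1/2)]
    ring
  have key : Ric (U i0) = ((c+3)/4*((r:ℝ)-1) - (1/4)*‖N‖^2)
      + (‖a - (1/2:ℝ)•N‖^2 + S) := by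
    rw [hRicEq, hexp]; ring
  have hSnn : 0 ≤ S := Finset.sum_nonneg fun j _ => sq_nonneg _
  have hbnn : 0 ≤ ‖a - (1/2:ℝ)•N‖^2 := sq_nonneg _
  -- decomposition of N
  have hNsplit : N = a + ∑ j ∈ Finset.univ.filter (fun j => j ≠ i0), T (U j) (U j) := by
    rw [hN, Finset.filter_ne',
      Finset.add_sum_erase Finset.univ (fun j => T (U j) (U j)) (Finset.mem_univ i0)]
  constructor
  · rw [key]; linarith
  constructor
  · intro h
    rw [key] at h
    have hb0 : ‖a - (1/2:ℝ)•N‖^2 = 0 := by linarith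
    have hS0 : S = 0 := by linarith
    have hab : a = (1/2:ℝ)•N := by
      have h1 : ‖a - (1/2:ℝ)•N‖ = 0 := by
        have := sq_eq_zero_iff.mp hb0
        exact this
      rw [norm_eq_zero, sub_eq_zero] at h1
      exact h1
    have hzero : ∀ j : Fin r, j ≠ i0 → T (U i0) (U j) = 0 := by
      intro j hj
      have hmem : j ∈ Finset.univ.filter (fun j => j ≠ i0) := by
        simp [hj]
      have h2 : ‖T (U i0) (U j)‖^2 = 0 :=
        (Finset.sum_eq_zero_iff_of_nonneg
          (fun j _ => sq_nonneg ‖T (U i0) (U j)‖)).mp hS0 j hmem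
      rw [sq_eq_zero_iff, norm_eq_zero] at h2
      exact h2
    refine ⟨?_, hzero⟩
    have h2a : a + a = N := by
      have : (2:ℝ) • a = (2:ℝ) • ((1/2:ℝ) • N) := by rw [← hab]
      rw [smul_smul] at this
      norm_num at this
      rw [two_smul] at this
      exact this
    have := hNsplit ▸ h2a
    exact add_left_cancel this
  · rintro ⟨h1, h2⟩
    have hS0 : S = 0 := by
      rw [hS]
      apply Finset.sum_eq_zero
      intro j hj
      rw [Finset.mem_filter] at hj
      rw [h2 j hj.2]
      simp
    have hab : a - (1/2:ℝ)•N = 0 := by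
      rw [hNsplit, ← h1]
      rw [smul_add]
      module
    rw [key, hab, hS0]
    simp
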